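/- Let 𝔽 be ℝ or ℂ, X a Banach space over 𝔽, and 𝒜 a standard operator algebra in B(X). Let A₁,…,Aₙ, B₁,…,Bₙ, C₁,…,Cₘ, D₁,…,Dₘ ∈ 𝒜 satisfy Σᵢ Aᵢ T Bᵢ = Σⱼ Cⱼ T Dⱼ for all T ∈ 𝒜. If A₁,…,Aₙ are linearly independent, then each Bᵢ lies in the linear span of D₁,…,Dₘ. -/

import Mathlib

set_option synthInstance.maxHeartbeats 400000
set_option maxHeartbeats 1000000

/-- The commutator `[A,B] = AB - BA` in a ring. -/
def bracket1 {R : Type*} [Ring R] (A B : R) : R := A * B - B * A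

/-- The 3-commutator `[A,B]₃ = [[[A,B],B],B]` in a ring. -/
def bracket3 {R : Type*} [Ring R] (A B : R) : R := bracket1 (bracket1 (bracket1 A B) B) B

/-- A standard operator algebra on a normed space `X` over `𝕜` is a subalgebra of
`B(X)` (automatically containing the identity) containing all finite-rank operators. -/
def IsStandardOperatorAlgebra (𝕜 : Type*) [RCLike 𝕜] (X : Type*)
    [NormedAddCommGroup X] [NormedSpace 𝕜 X]
    (𝒜 : Subalgebra 𝕜 (X →L[𝕜] X)) : Prop :=
  ∀ T : X →L[𝕜] X, FiniteDimensional 𝕜 (LinearMap.range (T : X →ₗ[𝕜] X)) → T ∈ 𝒜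

lemma dual_rep {K : Type*} [Field K] {n : ℕ} (f : (Fin n → K) →ₗ[K] K) (v : Fin n → K) :
    f v = ∑ i, v i * f (Pi.single i 1) := by
  conv_lhs => rw [← Finset.univ_sum_single v]
  rw [map_sum]
  refine Finset.sum_congr rfl fun i _ => ?_
  have : Pi.single i (v i) = v i • (Pi.single i 1 : Fin n → K) := by
    ext j; by_cases h : j = i <;> simp [Pi.single_apply, h]
  rw [this, map_smul, smul_eq_mul]

theorem stmt_2' {𝕜 X : Type*} [RCLike 𝕜] [NormedAddCommGroup X] [NormedSpace 𝕜 X]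
    [CompleteSpace X]
    (𝒜 : Subalgebra 𝕜 (X →L[𝕜] X))
    (h𝒜 : ∀ T : X →L[𝕜] X, FiniteDimensional 𝕜 (LinearMap.range (T : X →ₗ[𝕜] X)) → T ∈ 𝒜)
    (n m : ℕ) (A B : Fin n → 𝒜) (C D : Fin m → 𝒜)
    (heq : ∀ T : 𝒜, ∑ i, A i * T * B i = ∑ j, C j * T * D j)
    (hind : LinearIndependent 𝕜 A) :
    ∀ i, B i ∈ Submodule.span 𝕜 (Set.range D) := by
  intro i₀
  have hmem : ∀ (φ : X →L[𝕜] 𝕜) (x : X), (φ.smulRight x : X →L[𝕜] X) ∈ 𝒜 := by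
    intro φ x
    apply h𝒜
    have h : LinearMap.range ((φ.smulRight x : X →L[𝕜] X) : X →ₗ[𝕜] X) ≤ Submodule.span 𝕜 {x} := by
      rintro z ⟨y, rfl⟩
      simp only [ContinuousLinearMap.coe_coe, ContinuousLinearMap.smulRight_apply]
      exact Submodule.smul_mem _ _ (Submodule.mem_span_singleton_self x)
    exact Submodule.finiteDimensional_of_le h
  have key : ∀ (x y : X) (φ ψ : X →L[𝕜] 𝕜),
      ∑ i, φ ((B i : X →L[𝕜] X) y) * ψ ((A i : X →L[𝕜] X) x)
        = ∑ j, φ ((D j : X →L[𝕜] X) y) * ψ ((C j : X →L[𝕜] X) x) := by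
    intro x y φ ψ
    have h := heq ⟨φ.smulRight x, hmem φ x⟩
    have h2 := congrArg (fun T : 𝒜 => ψ ((T : X →L[𝕜] X) y)) h
    simpa [mul_comm, mul_left_comm] using h2
  set S : Set (Fin n → 𝕜) :=
    Set.range (fun p : X × (X →L[𝕜] 𝕜) => fun i => p.2 ((A i : X →L[𝕜] X) p.1)) with hS
  have hspan : Pi.single i₀ (1 : 𝕜) ∈ Submodule.span 𝕜 S := by
    by_contra hx
    obtain ⟨f, hf0, hfbot⟩ :=
      (Submodule.span 𝕜 S).exists_dual_map_eq_bot_of_notMem hx inferInstance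
    have hfS : ∀ v ∈ S, f v = 0 := by
      intro v hv
      have h1 : f v ∈ (Submodule.span 𝕜 S).map f := ⟨v, Submodule.subset_span hv, rfl⟩
      rw [hfbot] at h1
      simpa using h1
    have hzero : ∑ i, f (Pi.single i 1) • A i = 0 := by
      have hop : (∑ i, f (Pi.single i 1) • (A i : X →L[𝕜] X)) = 0 := by
        ext x
        apply NormedSpace.eq_zero_of_forall_dual_eq_zero 𝕜
        intro ψ
        have hv : (fun i => ψ ((A i : X →L[𝕜] X) x)) ∈ S := ⟨(x, ψ), rfl⟩
        have h0 := hfS _ hv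
        rw [dual_rep] at h0
        simpa [mul_comm] using h0
      apply Subtype.ext
      push_cast
      simpa using hop
    have : f (Pi.single i₀ 1) = 0 := (Fintype.linearIndependent_iff.mp hind _ hzero) i₀
    exact hf0 this
  obtain ⟨k, c, g, hg⟩ := Submodule.mem_span_set'.mp hspan
  choose p hp using fun s : Fin k => (g s).2
  set lam : Fin m → 𝕜 := fun j => ∑ s, c s * (p s).2 ((C j : X →L[𝕜] X) (p s).1) with hlam
  have hB : (B i₀ : X →L[𝕜] X) = ∑ j, lam j • (D j : X →L[𝕜] X) := by
    ext y
    apply sub_eq_zero.mp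
    apply NormedSpace.eq_zero_of_forall_dual_eq_zero 𝕜
    intro φ
    rw [map_sub]
    have h2 : ∑ s, c s * ∑ i, φ ((B i : X →L[𝕜] X) y) * ((g s : Fin n → 𝕜) i)
        = ∑ s, c s * ∑ j, φ ((D j : X →L[𝕜] X) y) * (p s).2 ((C j : X →L[𝕜] X) (p s).1) := by
      refine Finset.sum_congr rfl fun s _ => ?_
      congr 1
      have hg' : (g s : Fin n → 𝕜) = fun i => (p s).2 ((A i : X →L[𝕜] X) (p s).1) := (hp s).symm
      rw [hg']
      exact key (p s).1 y φ (p s).2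
    have hswap : ∀ {N : ℕ} (F : Fin N → 𝕜) (G : Fin k → Fin N → 𝕜),
        ∑ s, c s * ∑ i, F i * G s i = ∑ i, F i * ∑ s, c s * G s i := by
      intro N F G
      simp_rw [Finset.mul_sum]
      rw [Finset.sum_comm]
      exact Finset.sum_congr rfl fun i _ => Finset.sum_congr rfl fun s _ => by ring
    have hLHS : ∑ s, c s * ∑ i, φ ((B i : X →L[𝕜] X) y) * ((g s : Fin n → 𝕜) i)
        = φ ((B i₀ : X →L[𝕜] X) y) := by
      rw [hswap]
      have hpt : ∀ i, ∑ s, c s * ((g s : Fin n → 𝕜) i) = (Pi.single i₀ (1 : 𝕜) : Fin n → 𝕜) i := by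
        intro i
        have := congrFun hg i
        simpa [Finset.sum_apply] using this
      simp only [hpt]
      simp [Pi.single_apply]
    have hRHS : ∑ s, c s * ∑ j, φ ((D j : X →L[𝕜] X) y) * (p s).2 ((C j : X →L[𝕜] X) (p s).1)
        = φ ((∑ j, lam j • (D j : X →L[𝕜] X)) y) := by
      rw [hswap]
      simp only [ContinuousLinearMap.sum_apply, map_sum, ContinuousLinearMap.smul_apply,
        map_smul, smul_eq_mul, hlam]
      refine Finset.sum_congr rfl fun j _ => ?_
      exact mul_comm _ _
    rw [← hLHS, h2, hRHS, sub_self]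
  have hBA : B i₀ = ∑ j, lam j • D j := by
    apply Subtype.ext
    push_cast
    simpa using hB
  rw [hBA]
  exact Submodule.sum_mem _ fun j _ =>
    Submodule.smul_mem _ _ (Submodule.subset_span ⟨j, rfl⟩)


theorem stmt_2 {𝕜 X : Type*} [RCLike 𝕜] [NormedAddCommGroup X] [NormedSpace 𝕜 X]
    [CompleteSpace X]
    (𝒜 : Subalgebra 𝕜 (X →L[𝕜] X)) (h𝒜 : IsStandardOperatorAlgebra 𝕜 X 𝒜)
    (n m : ℕ) (A B : Fin n → 𝒜) (C D : Fin m → 𝒜)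
    (heq : ∀ T : 𝒜, ∑ i, A i * T * B i = ∑ j, C j * T * D j)
    (hind : LinearIndependent 𝕜 A) :
    ∀ i, B i ∈ Submodule.span 𝕜 (Set.range D) :=
  stmt_2' 𝒜 h𝒜 n m A B C D heq hind
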